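/- For z ∈ ℂ one has θ(z, τ) = 0 if and only if z ∈ Λ, where Λ = ℤτ + ℤ. -/

import Mathlib

open Complex Filter
open scoped Topology

noncomputable section

/-- The lattice `Λ = ℤτ + ℤ ⊂ ℂ` as a set. -/
def Lam (τ : ℂ) : Set ℂ := {c | ∃ l m : ℤ, c = l * τ + m}

/-- The infinite product `(y;q) = ∏_{j=0}^∞ (1 - y qʲ)`. -/
def qPoch (y q : ℂ) : ℂ := ∏' j : ℕ, (1 - y * q ^ j)

/-- The first Jacobi theta function
`θ(z,τ) = i e^{πi(τ/4 - z)} (x;q)(q/x;q)(q;q)`, `q = e^{2πiτ}`, `x = e^{2πiz}`. -/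
def theta (z τ : ℂ) : ℂ :=
  Complex.I * Complex.exp ((Real.pi : ℂ) * Complex.I * (τ / 4 - z)) *
    qPoch (Complex.exp (2 * (Real.pi : ℂ) * Complex.I * z))
      (Complex.exp (2 * (Real.pi : ℂ) * Complex.I * τ)) *
    qPoch (Complex.exp (2 * (Real.pi : ℂ) * Complex.I * τ) /
        Complex.exp (2 * (Real.pi : ℂ) * Complex.I * z))
      (Complex.exp (2 * (Real.pi : ℂ) * Complex.I * τ)) *
    qPoch (Complex.exp (2 * (Real.pi : ℂ) * Complex.I * τ))
      (Complex.exp (2 * (Real.pi : ℂ) * Complex.I * τ))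

/-- `θ'(z,τ)`, the derivative of `θ` in the `z` variable. -/
def thetaD (z τ : ℂ) : ℂ := deriv (fun u => theta u τ) z

/-- `σ_w(t,τ) = θ(w-t,τ)θ'(0,τ)/(θ(w,τ)θ(t,τ))`. -/
def sigmaW (w t τ : ℂ) : ℂ := theta (w - t) τ * thetaD 0 τ / (theta w τ * theta t τ)


/-- `θ(z,τ) = 0` iff `z ∈ Λ = ℤτ + ℤ`. -/
lemma tprod_eq_zero' {f : ℕ → ℂ} (j : ℕ) (h : f j = 0) : ∏' i, f i = 0 := by
  have hp : HasProd f 0 := by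
    have hev : ∀ᶠ s in (atTop : Filter (Finset ℕ)), ∏ i ∈ s, f i = 0 := by
      refine eventually_atTop.2 ⟨{j}, fun s hs => Finset.prod_eq_zero (hs (Finset.mem_singleton_self j)) h⟩
    exact Tendsto.congr' (EventuallyEq.symm hev) tendsto_const_nhds
  exact hp.tprod_eq

lemma log_summable' {y q : ℂ} (hq : ‖q‖ < 1) :
    Summable fun j : ℕ => Complex.log (1 - y * q ^ j) := by
  apply Summable.of_norm_bounded_eventually_nat (g := fun j => 3/2 * (‖y‖ * ‖q‖ ^ j))
  · exact (summable_geometric_of_lt_one (norm_nonneg q) hq |>.mul_left ‖y‖).mul_left (3/2)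
  · have h0 : Tendsto (fun j : ℕ => ‖y‖ * ‖q‖ ^ j) atTop (nhds 0) := by
      simpa using (tendsto_pow_atTop_nhds_zero_of_norm_lt_one (by simpa using hq)).const_mul ‖y‖
    have hev : ∀ᶠ j : ℕ in atTop, ‖y‖ * ‖q‖ ^ j ≤ 1/2 :=
      h0.eventually_le_const (by norm_num)
    filter_upwards [hev] with j hj
    have hn : ‖-(y * q ^ j)‖ ≤ 1/2 := by
      rw [norm_neg, norm_mul, norm_pow]; exact hj
    have := Complex.norm_log_one_add_half_le_self hn
    simp only [← sub_eq_add_neg] at this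
    calc ‖Complex.log (1 - y * q ^ j)‖ ≤ 3/2 * ‖-(y * q ^ j)‖ := this
      _ = 3/2 * (‖y‖ * ‖q‖ ^ j) := by rw [norm_neg, norm_mul, norm_pow]

lemma qPoch_ne_zero' {y q : ℂ} (hq : ‖q‖ < 1) (h : ∀ j : ℕ, 1 - y * q ^ j ≠ 0) :
    qPoch y q ≠ 0 := by
  have := Complex.cexp_tsum_eq_tprod (f := fun j : ℕ => 1 - y * q ^ j) h (log_summable' hq)
  rw [qPoch, ← this]
  exact Complex.exp_ne_zero _

lemma qPoch_eq_zero_iff' {y q : ℂ} (hq : ‖q‖ < 1) :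
    qPoch y q = 0 ↔ ∃ j : ℕ, 1 - y * q ^ j = 0 := by
  constructor
  · intro h
    by_contra hc
    push_neg at hc
    exact qPoch_ne_zero' hq hc h
  · rintro ⟨j, hj⟩
    exact tprod_eq_zero' j hj


theorem theta_eq_zero_iff (τ : ℂ) (hτ : 0 < τ.im) (z : ℂ) :
    theta z τ = 0 ↔ z ∈ Lam τ := by
  have hπ2 : (2 * (Real.pi : ℂ) * Complex.I) ≠ 0 := by
    simp [Real.pi_ne_zero, Complex.I_ne_zero]
  set q := Complex.exp (2 * (Real.pi : ℂ) * Complex.I * τ) with hq_def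
  set x := Complex.exp (2 * (Real.pi : ℂ) * Complex.I * z) with hx_def
  have hq1 : ‖q‖ < 1 := by
    rw [hq_def, Complex.norm_exp]
    apply Real.exp_lt_one_iff.mpr
    have : (2 * (Real.pi : ℂ) * Complex.I * τ).re = -(2 * Real.pi * τ.im) := by
      simp [Complex.mul_re, Complex.mul_im]
    rw [this]
    have := Real.pi_pos
    nlinarith
  have hx0 : x ≠ 0 := Complex.exp_ne_zero _
  have key : ∀ (w : ℂ) (j : ℕ), Complex.exp w * q ^ j
      = Complex.exp (w + (j : ℂ) * (2 * (Real.pi : ℂ) * Complex.I * τ)) := by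
    intro w j
    rw [Complex.exp_add, ← Complex.exp_nat_mul]
  constructor
  · intro h
    rw [theta] at h
    have hIe : Complex.I * Complex.exp ((Real.pi : ℂ) * Complex.I * (τ / 4 - z)) ≠ 0 :=
      mul_ne_zero Complex.I_ne_zero (Complex.exp_ne_zero _)
    rcases mul_eq_zero.mp h with h | hC
    · rcases mul_eq_zero.mp h with h | hB
      · rcases mul_eq_zero.mp h with h | hA
        · exact absurd h hIe
        · -- first product vanishes
          obtain ⟨j, hj⟩ := (qPoch_eq_zero_iff' hq1).mp hA
          have h1 : x * q ^ j = 1 := by linear_combination -hj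
          rw [hx_def, key] at h1
          obtain ⟨n, hn⟩ := Complex.exp_eq_one_iff.mp h1
          refine ⟨-(j : ℤ), n, ?_⟩
          have h2 : (2 * (Real.pi : ℂ) * Complex.I) *
              (z - (((-(j : ℤ)) : ℂ) * τ + (n : ℂ))) = 0 := by
            push_cast
            linear_combination hn
          have := (mul_eq_zero.mp h2).resolve_left hπ2
          have := sub_eq_zero.mp this
          push_cast at this ⊢
          exact this
      · -- second product vanishes
        obtain ⟨j, hj⟩ := (qPoch_eq_zero_iff' hq1).mp hB
        have h1 : (q / x) * q ^ j = 1 := by linear_combination -hj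
        rw [hq_def, hx_def, ← Complex.exp_sub, key] at h1
        obtain ⟨n, hn⟩ := Complex.exp_eq_one_iff.mp h1
        refine ⟨(j : ℤ) + 1, -n, ?_⟩
        have h2 : (2 * (Real.pi : ℂ) * Complex.I) *
            (z - ((((j : ℤ) + 1) : ℂ) * τ + ((-n : ℤ) : ℂ))) = 0 := by
          push_cast
          linear_combination -hn
        have := (mul_eq_zero.mp h2).resolve_left hπ2
        have := sub_eq_zero.mp this
        push_cast at this ⊢
        exact this
    · -- third product cannot vanish
      exfalso
      obtain ⟨j, hj⟩ := (qPoch_eq_zero_iff' hq1).mp hC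
      have h1 : q * q ^ j = 1 := by linear_combination -hj
      have hnorm : ‖q * q ^ j‖ = ‖q‖ ^ (j + 1) := by
        rw [norm_mul, norm_pow, pow_succ]
        ring
      rw [h1] at hnorm
      have hlt : ‖q‖ ^ (j + 1) < 1 :=
        pow_lt_one₀ (norm_nonneg q) hq1 (Nat.succ_ne_zero j)
      rw [← hnorm] at hlt
      simp at hlt
  · rintro ⟨l, m, hz⟩
    rw [theta]
    rcases le_or_gt l 0 with hl | hl
    · have hjc : (((-l).toNat : ℕ) : ℂ) = -(l : ℂ) := by
        have h := Int.toNat_of_nonneg (neg_nonneg.mpr hl)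
        calc (((-l).toNat : ℕ) : ℂ) = (((-l).toNat : ℤ) : ℂ) := by push_cast; ring
          _ = ((-l : ℤ) : ℂ) := by rw [h]
          _ = -(l : ℂ) := by push_cast; ring
      have hfac : 1 - x * q ^ ((-l).toNat) = 0 := by
        rw [hx_def, key]
        have : 2 * (Real.pi : ℂ) * Complex.I * z
            + (((-l).toNat : ℕ) : ℂ) * (2 * (Real.pi : ℂ) * Complex.I * τ)
            = (m : ℂ) * (2 * (Real.pi : ℂ) * Complex.I) := by
          rw [hjc, hz]
          ring
        rw [this, Complex.exp_int_mul_two_pi_mul_I]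
        ring
      have hA : qPoch x q = 0 := (qPoch_eq_zero_iff' hq1).mpr ⟨_, hfac⟩
      rw [hA]
      ring
    · have hjc : (((l - 1).toNat : ℕ) : ℂ) = (l : ℂ) - 1 := by
        have h : ((l - 1).toNat : ℤ) = l - 1 := Int.toNat_of_nonneg (by omega)
        calc (((l - 1).toNat : ℕ) : ℂ) = (((l - 1).toNat : ℤ) : ℂ) := by push_cast; ring
          _ = ((l - 1 : ℤ) : ℂ) := by rw [h]
          _ = (l : ℂ) - 1 := by push_cast; ring
      have hfac : 1 - (q / x) * q ^ ((l - 1).toNat) = 0 := by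
        rw [hq_def, hx_def, ← Complex.exp_sub, key]
        have : (2 * (Real.pi : ℂ) * Complex.I * τ - 2 * (Real.pi : ℂ) * Complex.I * z)
            + (((l - 1).toNat : ℕ) : ℂ) * (2 * (Real.pi : ℂ) * Complex.I * τ)
            = ((-m : ℤ) : ℂ) * (2 * (Real.pi : ℂ) * Complex.I) := by
          rw [hjc, hz]
          push_cast
          ring
        rw [this, Complex.exp_int_mul_two_pi_mul_I]
        ring
      have hB : qPoch (q / x) q = 0 := (qPoch_eq_zero_iff' hq1).mpr ⟨_, hfac⟩
      rw [hB]
      ring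

end
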